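/- Replaceability for the PN(k,p,q) upper bounds: let p ∈ {k+1,…,n}, q ∈ {1,…,n}, and let v : {1,…,k} → {1,…,n} be an arbitrary assignment of target outcome values. Then: (i) P(⋂_{j=1}^{k} {Y_j = v(j)} ∩ {X = p} ∩ {Y = q}) ≤ P(X = p, Y = q); and (ii) for every j ∈ {1,…,k}, P(⋂_{j=1}^{k} {Y_j = v(j)} ∩ {X = p} ∩ {Y = q}) ≤ P(Y_j = v(j)) − P(X = j, Y = v(j)). -/
import Mathlib


open MeasureTheory

theorem pn_kpq_upper_bounds_replaceability
    {Ω : Type*} [MeasurableSpace Ω] (P : Measure Ω) [IsProbabilityMeasure P]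
    (n k : ℕ) (hk1 : 1 ≤ k) (hkn : k ≤ n)
    (X : Ω → ℕ) (Y : ℕ → Ω → ℕ) (Yobs : Ω → ℕ)
    (hX : Measurable X) (hY : ∀ j, Measurable (Y j))
    (hXr : ∀ ω, X ω ∈ Finset.Icc 1 n)
    (hYr : ∀ j ω, Y j ω ∈ Finset.Icc 1 n)
    (hcons : ∀ ω, Yobs ω = Y (X ω) ω)
    (p : ℕ) (hp : p ∈ Finset.Icc (k+1) n)
    (q : ℕ) (hq : q ∈ Finset.Icc 1 n)
    (v : ℕ → ℕ) (hv : ∀ j ∈ Finset.Icc 1 k, v j ∈ Finset.Icc 1 n) :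
    (P ((⋂ j ∈ Finset.Icc 1 k, {ω | Y j ω = v j}) ∩ {ω | X ω = p} ∩ {ω | Yobs ω = q})).toReal ≤ (P {ω | X ω = p ∧ Yobs ω = q}).toReal ∧
    ∀ j ∈ Finset.Icc 1 k, (P ((⋂ j ∈ Finset.Icc 1 k, {ω | Y j ω = v j}) ∩ {ω | X ω = p} ∩ {ω | Yobs ω = q})).toReal ≤ (P {ω | Y j ω = v j}).toReal - (P {ω | X ω = j ∧ Yobs ω = v j}).toReal := by
  set A := (⋂ j ∈ Finset.Icc 1 k, {ω | Y j ω = v j}) ∩ {ω | X ω = p} ∩ {ω | Yobs ω = q}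
  constructor
  · apply ENNReal.toReal_mono (measure_ne_top P _)
    apply measure_mono
    intro ω hω
    exact ⟨hω.1.2, hω.2⟩
  · intro j hj
    have hjk := Finset.mem_Icc.mp hj
    have hjp : j ≠ p := by
      have := (Finset.mem_Icc.mp hp).1
      omega
    -- B = {X = j ∧ Yobs = v j} equals {X = j} ∩ {Y j = v j}
    have hBeq : {ω | X ω = j ∧ Yobs ω = v j} = {ω | X ω = j} ∩ {ω | Y j ω = v j} := by
      ext ω
      simp only [Set.mem_setOf_eq, Set.mem_inter_iff]
      constructor
      · rintro ⟨h1, h2⟩; rw [hcons, h1] at h2; exact ⟨h1, h2⟩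
      · rintro ⟨h1, h2⟩; rw [hcons, h1]; exact ⟨rfl, h2⟩
    have hBmeas : MeasurableSet {ω | X ω = j ∧ Yobs ω = v j} := by
      rw [hBeq]
      exact (hX (measurableSet_singleton j)).inter ((hY j) (measurableSet_singleton (v j)))
    have hBsub : {ω | X ω = j ∧ Yobs ω = v j} ⊆ {ω | Y j ω = v j} := by
      rw [hBeq]; exact Set.inter_subset_right
    have hAsub : A ⊆ {ω | Y j ω = v j} \ {ω | X ω = j ∧ Yobs ω = v j} := by
      intro ω hω
      obtain ⟨⟨h1, h2⟩, h3⟩ := hω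
      have hYj : Y j ω = v j := by
        have := Set.mem_iInter₂.mp h1 j hj
        exact this
      refine ⟨hYj, ?_⟩
      intro hc
      exact hjp (hc.1.symm.trans h2)
    have hdiff : P ({ω | Y j ω = v j} \ {ω | X ω = j ∧ Yobs ω = v j})
        = P {ω | Y j ω = v j} - P {ω | X ω = j ∧ Yobs ω = v j} :=
      measure_diff hBsub hBmeas.nullMeasurableSet (measure_ne_top P _)
    have h1 : P A ≤ P {ω | Y j ω = v j} - P {ω | X ω = j ∧ Yobs ω = v j} := by
      rw [← hdiff]; exact measure_mono hAsub
    have h2 := ENNReal.toReal_mono (by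
      exact ne_top_of_le_ne_top (measure_ne_top P _) tsub_le_self) h1
    refine h2.trans ?_
    rw [ENNReal.toReal_sub_of_le (measure_mono hBsub) (measure_ne_top P _)]
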